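/- Let E be the Banach algebra of continuous ℂ-linear endomorphisms of the space of n×n complex matrices, let L_0, L, Y ∈ E with L_0∘Y − Y∘L_0 = L, let P ∈ E be idempotent (P∘P = P), and set Q := 1 − P and 𝓛(s) := exp(−s L_0)∘L∘exp(s L_0). Then for every t ∈ ℝ the second-order time-convolutionless coefficient K_2(t) := ∫_0^t P∘𝓛(t)∘Q∘𝓛(s)∘P ds satisfies K_2(t) = P∘𝓛(t)∘Q∘(Y − exp(−t L_0)∘Y∘exp(t L_0))∘P. -/

import Mathlib

open MeasureTheory

attribute [local instance] Matrix.linftyOpNormedAddCommGroup Matrix.linftyOpNormedSpace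

section Aux

variable {𝔸 : Type*} [NormedRing 𝔸] [NormedAlgebra ℂ 𝔸] [CompleteSpace 𝔸]

lemma aux_cont (L₀ L : 𝔸) : Continuous fun s : ℝ =>
    NormedSpace.exp (-(s • L₀)) * L * NormedSpace.exp (s • L₀) := by
  have hee : (NormedSpace.exp : 𝔸 → 𝔸) = NormedSpace.exp :=
    rfl
  rw [hee]
  have hc : ∀ x : 𝔸, Continuous fun s : ℝ => NormedSpace.exp (s • x) := fun x =>
    continuous_iff_continuousAt.2 fun s => (hasDerivAt_exp_smul_const (𝕂 := ℝ) x s).continuousAt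
  refine (((hc (-L₀)).mul (continuous_const (y := L))).mul (hc L₀)).congr fun s => ?_
  simp only [smul_neg, Pi.mul_apply]

lemma aux_integral_exp_conj (L₀ L Y : 𝔸) (hY : L₀ * Y - Y * L₀ = L) (t : ℝ) :
    (∫ s in (0:ℝ)..t, NormedSpace.exp (-(s • L₀)) * L * NormedSpace.exp (s • L₀)) =
      Y - NormedSpace.exp (-(t • L₀)) * Y * NormedSpace.exp (t • L₀) := by
  have hee : (NormedSpace.exp : 𝔸 → 𝔸) = NormedSpace.exp :=
    rfl
  have key : ∀ s : ℝ, HasDerivAt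
      (fun u : ℝ => NormedSpace.exp (-(u • L₀)) * Y * NormedSpace.exp (u • L₀))
      (-(NormedSpace.exp (-(s • L₀)) * L * NormedSpace.exp (s • L₀))) s := by
    intro s
    rw [hee]
    have h1 : HasDerivAt (fun u : ℝ => NormedSpace.exp (-(u • L₀)))
        (NormedSpace.exp (-(s • L₀)) * -L₀) s := by
      simpa only [smul_neg] using hasDerivAt_exp_smul_const (-L₀) s
    have h2 : HasDerivAt (fun u : ℝ => NormedSpace.exp (u • L₀))
        (L₀ * NormedSpace.exp (s • L₀)) s := hasDerivAt_exp_smul_const' L₀ s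
    have h3 := (h1.mul_const Y).mul h2
    convert h3 using 1
    · rfl
    rw [← hY]
    noncomm_ring
  have hftc := intervalIntegral.integral_eq_sub_of_hasDerivAt
    (f := fun u : ℝ => NormedSpace.exp (-(u • L₀)) * Y * NormedSpace.exp (u • L₀))
    (f' := fun s => -(NormedSpace.exp (-(s • L₀)) * L * NormedSpace.exp (s • L₀)))
    (fun s _ => key s) ((aux_cont L₀ L).neg.intervalIntegrable 0 t)
  rw [intervalIntegral.integral_neg] at hftc
  simp only [zero_smul, neg_zero, NormedSpace.exp_zero, mul_one, one_mul] at hftc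
  rw [← neg_neg (∫ s in (0:ℝ)..t,
      NormedSpace.exp (-(s • L₀)) * L * NormedSpace.exp (s • L₀)), hftc, neg_sub]

end Aux

/-- Port helper: the operator-norm instances on `M →L[ℂ] M` for `M` the matrices with the
`linftyOp` norm. They are the same instances as before; they are now given by hand because
instance search no longer unifies the Pi topology on matrices with the `linftyOp` one. -/
noncomputable instance stmt8CLMNormedRing {n : ℕ} :
    NormedRing (Matrix (Fin n) (Fin n) ℂ →L[ℂ] Matrix (Fin n) (Fin n) ℂ) :=
  ContinuousLinearMap.toNormedRing

noncomputable instance stmt8CLMNormedSpace {n : ℕ} :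
    NormedSpace ℂ (Matrix (Fin n) (Fin n) ℂ →L[ℂ] Matrix (Fin n) (Fin n) ℂ) :=
  ContinuousLinearMap.toNormedSpace

instance stmt8CLMIsTopologicalRing {n : ℕ} :
    IsTopologicalRing (Matrix (Fin n) (Fin n) ℂ →L[ℂ] Matrix (Fin n) (Fin n) ℂ) :=
  @NonUnitalSeminormedRing.toIsTopologicalRing _ _

/-- with `𝓛(s) = e^{-s L_0} L e^{s L_0}`, `[L_0, Y] = L`, `P` idempotent and
`Q = 1 - P`, the second-order time-convolutionless coefficient
`K_2(t) = ∫_0^t P 𝓛(t) Q 𝓛(s) P ds` equals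
`P 𝓛(t) Q (Y - e^{-t L_0} Y e^{t L_0}) P`. -/
theorem stmt8 (n : ℕ)
    (L₀ L Y P : Matrix (Fin n) (Fin n) ℂ →L[ℂ] Matrix (Fin n) (Fin n) ℂ)
    (hY : L₀ * Y - Y * L₀ = L) (hP : P * P = P)
    (Q : Matrix (Fin n) (Fin n) ℂ →L[ℂ] Matrix (Fin n) (Fin n) ℂ) (hQ : Q = 1 - P)
    (𝓛 : ℝ → (Matrix (Fin n) (Fin n) ℂ →L[ℂ] Matrix (Fin n) (Fin n) ℂ))
    (h𝓛 : ∀ s, 𝓛 s = NormedSpace.exp (-(s • L₀)) * L * NormedSpace.exp (s • L₀))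
    (t : ℝ) :
    (∫ s in (0:ℝ)..t, P * 𝓛 t * Q * 𝓛 s * P) =
      P * 𝓛 t * Q *
        (Y - NormedSpace.exp (-(t • L₀)) * Y * NormedSpace.exp (t • L₀)) * P := by
  have hcs : CompleteSpace (Matrix (Fin n) (Fin n) ℂ →L[ℂ] Matrix (Fin n) (Fin n) ℂ) :=
    letI : NormedAddCommGroup (Matrix (Fin n) (Fin n) ℂ →L[ℂ] Matrix (Fin n) (Fin n) ℂ) := inferInstance
    letI : NormedSpace ℂ (Matrix (Fin n) (Fin n) ℂ →L[ℂ] Matrix (Fin n) (Fin n) ℂ) := stmt8CLMNormedSpace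
    FiniteDimensional.complete ℂ _
  have hcont : Continuous 𝓛 := by
    rw [funext h𝓛]
    exact @aux_cont _ stmt8CLMNormedRing ContinuousLinearMap.toNormedAlgebra hcs L₀ L
  set A := P * 𝓛 t * Q with hA
  have hint : (∫ s in (0:ℝ)..t, 𝓛 s) =
      Y - NormedSpace.exp (-(t • L₀)) * Y * NormedSpace.exp (t • L₀) := by
    rw [intervalIntegral.integral_congr (g := fun s =>
      NormedSpace.exp (-(s • L₀)) * L * NormedSpace.exp (s • L₀)) (fun s _ => h𝓛 s)]
    exact @aux_integral_exp_conj _ stmt8CLMNormedRing ContinuousLinearMap.toNormedAlgebra hcs L₀ L Y hY t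
  let φ : (Matrix (Fin n) (Fin n) ℂ →L[ℂ] Matrix (Fin n) (Fin n) ℂ) →L[ℝ]
      (Matrix (Fin n) (Fin n) ℂ →L[ℂ] Matrix (Fin n) (Fin n) ℂ) :=
    { toFun := fun x => A * x * P
      map_add' := fun x y => by simp only [mul_add, add_mul]
      map_smul' := fun c x => by
        ext m
        simp [ContinuousLinearMap.mul_apply]
      cont := (continuous_const.mul continuous_id).mul continuous_const }
  have hφ : ∀ x, φ x = A * x * P := fun x => rfl
  calc (∫ s in (0:ℝ)..t, P * 𝓛 t * Q * 𝓛 s * P) = ∫ s in (0:ℝ)..t, φ (𝓛 s) := by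
        refine intervalIntegral.integral_congr fun s _ => ?_
        rw [hφ, hA]
    _ = φ (∫ s in (0:ℝ)..t, 𝓛 s) :=
        @ContinuousLinearMap.intervalIntegral_comp_comm _ _ _ _ _ _ _ _ _ _ _ _ _ _ hcs hcs φ
          (hcont.intervalIntegrable 0 t)
    _ = _ := by rw [hφ, hint]
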